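/- Let n be a positive integer, m ≥ 2, and let g : ℝ^n → ℝ^m be l∞ 1-Lipschitz. Fix s ∈ ℝ^n and let a* be an index such that g(s)_{a*} ≥ g(s)_j for all j, and let margin(g,s) = g(s)_{a*} − max_{j ≠ a*} g(s)_j. Then for every s' ∈ ℝ^n for which a* is not a maximizer of g(s') (i.e. there exists j with g(s')_j > g(s')_{a*}), one has ‖s' − s‖∞ ≥ margin(g,s)/2; consequently the robust radius R(g,s) := inf{‖s' − s‖∞ : a* is not a maximizer of g(s')} satisfies R(g,s) ≥ margin(g,s)/2. -/

import Mathlib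

/-- If `g : ℝⁿ → ℝᵐ` is `l∞` 1-Lipschitz, `a` is a maximizer of `g s`,
and `margin` is the gap between the largest and second-largest coordinates of `g s`,
then every `s'` at which `a` is not a maximizer of `g s'` satisfies
`margin / 2 ≤ ‖s' - s‖∞`; consequently the robust radius (the infimum, in `ENNReal`,
of `‖s' - s‖∞` over such `s'`, which is `+∞` if no such `s'` exists) is at least
`margin / 2`. -/
theorem sortrl_robust_radius_ge_half_margin
    (n m : ℕ) (hn : 0 < n) (hm : 2 ≤ m)
    (g : (Fin n → ℝ) → (Fin m → ℝ))
    (hg : ∀ x y, ‖g x - g y‖ ≤ ‖x - y‖)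
    (s : Fin n → ℝ) (a : Fin m)
    (ha : ∀ j, g s j ≤ g s a)
    (margin : ℝ)
    (hmargin : margin = g s a -
      (Finset.univ.erase a).sup'
        (by
          rw [← Finset.card_pos, Finset.card_erase_of_mem (Finset.mem_univ a),
            Finset.card_univ, Fintype.card_fin]
          omega)
        (g s)) :
    (∀ s' : Fin n → ℝ, (∃ j, g s' a < g s' j) → margin / 2 ≤ ‖s' - s‖) ∧
    ENNReal.ofReal (margin / 2) ≤
      ⨅ s' ∈ {s' : Fin n → ℝ | ∃ j, g s' a < g s' j}, (‖s' - s‖₊ : ENNReal) := by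
  have key : ∀ s' : Fin n → ℝ, (∃ j, g s' a < g s' j) → margin / 2 ≤ ‖s' - s‖ := by
    intro s' ⟨j, hj⟩
    have hja : j ≠ a := by
      intro h; rw [h] at hj; exact lt_irrefl _ hj
    have h1 : |g s' j - g s j| ≤ ‖s' - s‖ := by
      calc |g s' j - g s j| = ‖(g s' - g s) j‖ := by simp [Pi.sub_apply, Real.norm_eq_abs]
        _ ≤ ‖g s' - g s‖ := norm_le_pi_norm _ j
        _ ≤ ‖s' - s‖ := hg s' s
    have h2 : |g s' a - g s a| ≤ ‖s' - s‖ := by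
      calc |g s' a - g s a| = ‖(g s' - g s) a‖ := by simp [Pi.sub_apply, Real.norm_eq_abs]
        _ ≤ ‖g s' - g s‖ := norm_le_pi_norm _ a
        _ ≤ ‖s' - s‖ := hg s' s
    have hsup : g s j ≤ (Finset.univ.erase a).sup' (by
          rw [← Finset.card_pos, Finset.card_erase_of_mem (Finset.mem_univ a),
            Finset.card_univ, Fintype.card_fin]
          omega) (g s) :=
      Finset.le_sup' (g s) (Finset.mem_erase.mpr ⟨hja, Finset.mem_univ j⟩)
    have h1' := (abs_le.mp h1).2
    have h2' := (abs_le.mp h2).1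
    rw [hmargin]
    linarith
  refine ⟨key, ?_⟩
  refine le_iInf₂ fun s' hs' => ?_
  have := key s' hs'
  calc ENNReal.ofReal (margin / 2) ≤ ENNReal.ofReal ‖s' - s‖ :=
        ENNReal.ofReal_le_ofReal this
    _ = (‖s' - s‖₊ : ENNReal) := ofReal_norm _
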